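/- Let ℓ : Θ × 𝒟ⁿ → ℝ be a collection of measurable functions with finite sensitivity Δ, i.e., |ℓ(θ,D) − ℓ(θ,D')| ≤ Δ for all adjacent D, D' and ν-almost all θ. Suppose ∫ exp(−(ε/(2Δ)) ℓ(θ,D)) dν(θ) is finite and positive for all D. Then the family of probability measures μ_D with density f_D(θ) ∝ exp(−(ε/(2Δ)) ℓ(θ,D)) with respect to ν satisfies ε-differential privacy: for every measurable set B and all adjacent D, D', μ_D(B) ≤ exp(ε) · μ_{D'}(B). -/

import Mathlib

open MeasureTheory Real

/-- Exponential mechanism (McSherry–Talwar): if the objective `ℓ` has finite sensitivity `Δ`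
over adjacent databases (ν-a.e. in `θ`), and the normalizing integrals are finite and positive,
then the mechanism with density proportional to `exp(-(ε/(2Δ)) ℓ(θ,D))` w.r.t. `ν`
satisfies `ε`-differential privacy. -/
theorem exponential_mechanism_DP
    {Θ : Type*} [MeasurableSpace Θ] (ν : Measure Θ) [SigmaFinite ν]
    {𝒟 : Type*} [DecidableEq 𝒟] {n : ℕ}
    (ℓ : Θ → (Fin n → 𝒟) → ℝ)
    (hmeas : ∀ D, Measurable (fun θ => ℓ θ D))
    (ε Δ : ℝ) (hε : 0 < ε) (hΔ : 0 < Δ)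
    (hsens : ∀ D D' : Fin n → 𝒟, hammingDist D D' = 1 →
      ∀ᵐ θ ∂ν, |ℓ θ D - ℓ θ D'| ≤ Δ)
    (Z : (Fin n → 𝒟) → ℝ)
    (hZ : ∀ D, Z D = ∫ θ, exp (-(ε / (2 * Δ)) * ℓ θ D) ∂ν)
    (hZint : ∀ D, Integrable (fun θ => exp (-(ε / (2 * Δ)) * ℓ θ D)) ν)
    (hZpos : ∀ D, 0 < Z D)
    (μ : (Fin n → 𝒟) → Measure Θ)
    (hμ : ∀ D, μ D = ν.withDensity
      (fun θ => ENNReal.ofReal (exp (-(ε / (2 * Δ)) * ℓ θ D) / Z D))) :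
    ∀ D D' : Fin n → 𝒟, hammingDist D D' = 1 →
      ∀ B : Set Θ, MeasurableSet B →
        μ D B ≤ ENNReal.ofReal (exp ε) * μ D' B := by
  intro D D' hadj B hB
  set c : ℝ := ε / (2 * Δ) with hc
  have hcpos : 0 < c := div_pos hε (by positivity)
  have hcΔ : c * Δ = ε / 2 := by
    field_simp [hc]
    rw [hc]; field_simp
  -- pointwise a.e. bound between exponentials
  have hpt : ∀ᵐ θ ∂ν, exp (-c * ℓ θ D) ≤ exp (ε / 2) * exp (-c * ℓ θ D') := by
    filter_upwards [hsens D D' hadj] with θ hθ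
    rw [← Real.exp_add]
    apply Real.exp_le_exp.2
    have h1 : -c * ℓ θ D - (-c * ℓ θ D') = -(c * (ℓ θ D - ℓ θ D')) := by ring
    have h2 : c * (ℓ θ D - ℓ θ D') ≥ -(ε / 2) := by
      have := neg_abs_le (ℓ θ D - ℓ θ D')
      nlinarith [abs_nonneg (ℓ θ D - ℓ θ D')]
    linarith
  have hpt' : ∀ᵐ θ ∂ν, exp (-c * ℓ θ D') ≤ exp (ε / 2) * exp (-c * ℓ θ D) := by
    filter_upwards [hsens D D' hadj] with θ hθ
    rw [← Real.exp_add]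
    apply Real.exp_le_exp.2
    have h2 : c * (ℓ θ D - ℓ θ D') ≤ ε / 2 := by
      have := le_abs_self (ℓ θ D - ℓ θ D')
      nlinarith [abs_nonneg (ℓ θ D - ℓ θ D')]
    linarith
  -- normalization constants comparison: Z D' ≤ exp(ε/2) * Z D
  have hZle : Z D' ≤ exp (ε / 2) * Z D := by
    rw [hZ D, hZ D']
    rw [← integral_const_mul]
    exact integral_mono_ae (hZint D') ((hZint D).const_mul (exp (ε / 2))) hpt'
  -- a.e. density comparison
  have hdens : ∀ᵐ θ ∂ν,
      ENNReal.ofReal (exp (-c * ℓ θ D) / Z D) ≤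
        ENNReal.ofReal (exp ε) * ENNReal.ofReal (exp (-c * ℓ θ D') / Z D') := by
    filter_upwards [hpt] with θ hθ
    rw [← ENNReal.ofReal_mul (le_of_lt (Real.exp_pos ε))]
    apply ENNReal.ofReal_le_ofReal
    have hZD := hZpos D
    have hZD' := hZpos D'
    rw [mul_div_assoc', div_le_div_iff₀ hZD hZD']
    calc exp (-c * ℓ θ D) * Z D'
        ≤ (exp (ε / 2) * exp (-c * ℓ θ D')) * (exp (ε / 2) * Z D) := by
          apply mul_le_mul hθ hZle (le_of_lt hZD')
          positivity
      _ = exp (ε / 2) * exp (ε / 2) * (exp (-c * ℓ θ D') * Z D) := by ring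
      _ = exp ε * exp (-c * ℓ θ D') * Z D := by
          rw [← Real.exp_add]; norm_num; ring
  -- conclude via lintegral monotonicity
  rw [hμ D, hμ D', withDensity_apply _ hB, withDensity_apply _ hB]
  calc ∫⁻ θ in B, ENNReal.ofReal (exp (-(ε / (2 * Δ)) * ℓ θ D) / Z D) ∂ν
      ≤ ∫⁻ θ in B, ENNReal.ofReal (exp ε) *
          ENNReal.ofReal (exp (-(ε / (2 * Δ)) * ℓ θ D') / Z D') ∂ν :=
        lintegral_mono_ae (ae_restrict_of_ae hdens)
    _ = ENNReal.ofReal (exp ε) *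
          ∫⁻ θ in B, ENNReal.ofReal (exp (-(ε / (2 * Δ)) * ℓ θ D') / Z D') ∂ν :=
        lintegral_const_mul' _ _ ENNReal.ofReal_ne_top
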